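/- arXiv:1508.04192 — 3 statements merged into one kernel-verified Lean document; each statement's English description precedes it below -/
import Mathlib

section
/- Under the Weierstrass setting, let t ≥ s, let L, D ∈ ℂ^{n×t} be arbitrary matrices, set R := F₀·D, Â := L*·A·R and B̂ := L*·B·R (where * denotes conjugate transpose). Then for every z ∈ ℂ one has the factorization z·B̂ − Â = (L*·(T^{-1})_{(:,1:s)}) · (z·I_s − J₁) · ((S^{-1})_{(1:s,:)}·D). -/
open Matrix

/-- Factorization `z·B̂ − Â = (L*·(T⁻¹)_{(:,1:s)})·(z·I_s − J₁)·((S⁻¹)_{(1:s,:)}·D)`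
where `R = F₀·D`, `Â = L*·A·R`, `B̂ = L*·B·R`. -/
theorem pencil_factorization
    (n d s t : ℕ) (hs : 0 < s) (hsd : s ≤ d) (hdn : d ≤ n) (hts : s ≤ t)
    (A B S T : Matrix (Fin n) (Fin n) ℂ) (hS : IsUnit S) (hT : IsUnit T)
    (J : Matrix (Fin d) (Fin d) ℂ) (hJtri : J.BlockTriangular (id : Fin d → Fin d))
    (N : Matrix (Fin (n - d)) (Fin (n - d)) ℂ) (hN : IsNilpotent N)
    (hA : T * A * S =
      (Matrix.fromBlocks J 0 0 (1 : Matrix (Fin (n - d)) (Fin (n - d)) ℂ)).submatrix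
        (finSumFinEquiv.trans (finCongr (Nat.add_sub_cancel' hdn))).symm
        (finSumFinEquiv.trans (finCongr (Nat.add_sub_cancel' hdn))).symm)
    (hB : T * B * S =
      (Matrix.fromBlocks (1 : Matrix (Fin d) (Fin d) ℂ) 0 0 N).submatrix
        (finSumFinEquiv.trans (finCongr (Nat.add_sub_cancel' hdn))).symm
        (finSumFinEquiv.trans (finCongr (Nat.add_sub_cancel' hdn))).symm)
    (J₁ : Matrix (Fin s) (Fin s) ℂ) (J₂ : Matrix (Fin (d - s)) (Fin (d - s)) ℂ)
    (hJ : J = (Matrix.fromBlocks J₁ 0 0 J₂).submatrix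
        (finSumFinEquiv.trans (finCongr (Nat.add_sub_cancel' hsd))).symm
        (finSumFinEquiv.trans (finCongr (Nat.add_sub_cancel' hsd))).symm)
    (F : ℕ → Matrix (Fin n) (Fin n) ℂ)
    (hF : ∀ k : ℕ, F k =
      S.submatrix id (Fin.castLE (hsd.trans hdn)) * (J₁ ^ k) *
        S⁻¹.submatrix (Fin.castLE (hsd.trans hdn)) id)
    (L D : Matrix (Fin n) (Fin t) ℂ)
    (R : Matrix (Fin n) (Fin t) ℂ) (hR : R = F 0 * D)
    (Ahat Bhat : Matrix (Fin t) (Fin t) ℂ)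
    (hAhat : Ahat = Lᴴ * A * R) (hBhat : Bhat = Lᴴ * B * R) :
    ∀ z : ℂ,
      z • Bhat - Ahat =
        (Lᴴ * T⁻¹.submatrix id (Fin.castLE (hsd.trans hdn))) *
          (z • (1 : Matrix (Fin s) (Fin s) ℂ) - J₁) *
          (S⁻¹.submatrix (Fin.castLE (hsd.trans hdn)) id * D) := by

  intro z
  have hTd : IsUnit T.det := (Matrix.isUnit_iff_isUnit_det T).mp hT
  -- the column inclusion map and matrix
  set c : Fin s → Fin n := Fin.castLE (hsd.trans hdn) with hc
  set ι : Matrix (Fin n) (Fin s) ℂ :=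
    Matrix.of (fun i j => if (i : ℕ) = (j : ℕ) then (1 : ℂ) else 0) with hι
  have hsubcol : ∀ X : Matrix (Fin n) (Fin n) ℂ, X.submatrix id c = X * ι := by
    intro X; ext i j
    rw [Matrix.mul_apply, Finset.sum_eq_single (c j)]
    · simp [hι, hc]
    · intro k _ hk
      simp only [hι, Matrix.of_apply]
      rw [if_neg, mul_zero]
      intro h; exact hk (Fin.ext (by simpa [hc] using h))
    · simp
  set e : Fin d ⊕ Fin (n - d) ≃ Fin n :=
    finSumFinEquiv.trans (finCongr (Nat.add_sub_cancel' hdn)) with he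
  set e2 : Fin s ⊕ Fin (d - s) ≃ Fin d :=
    finSumFinEquiv.trans (finCongr (Nat.add_sub_cancel' hsd)) with he2
  have heL : ∀ x : Fin d, ((e (Sum.inl x) : ℕ)) = (x : ℕ) := by
    intro x; simp [he]
  have heR : ∀ x : Fin (n - d), ((e (Sum.inr x) : ℕ)) = d + (x : ℕ) := by
    intro x; simp [he]
  have he2L : ∀ x : Fin s, ((e2 (Sum.inl x) : ℕ)) = (x : ℕ) := by
    intro x; simp [he2]
  have he2R : ∀ x : Fin (d - s), ((e2 (Sum.inr x) : ℕ)) = s + (x : ℕ) := by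
    intro x; simp [he2]
  have hcol : ∀ j : Fin s, e.symm (c j) = Sum.inl (Fin.castLE hsd j) := by
    intro j
    rw [Equiv.symm_apply_eq]
    exact Fin.ext (by simp [heL, hc])
  have hcol2 : ∀ j : Fin s, e2.symm (Fin.castLE hsd j) = Sum.inl j := by
    intro j
    rw [Equiv.symm_apply_eq]
    exact Fin.ext (by simp [he2L])
  -- RHS of the entrywise key claims
  have hιmul : ∀ (M : Matrix (Fin s) (Fin s) ℂ) (i : Fin n) (j : Fin s),
      (ι * M) i j = if h : (i : ℕ) < s then M ⟨i, h⟩ j else 0 := by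
    intro M i j
    rw [Matrix.mul_apply]
    by_cases h : (i : ℕ) < s
    · rw [dif_pos h, Finset.sum_eq_single (⟨(i : ℕ), h⟩ : Fin s)]
      · simp [hι]
      · intro k _ hk
        simp only [hι, Matrix.of_apply]
        rw [if_neg, zero_mul]
        intro hh; exact hk (Fin.ext hh.symm)
      · simp
    · rw [dif_neg h]
      apply Finset.sum_eq_zero
      intro k _
      simp only [hι, Matrix.of_apply]
      rw [if_neg, zero_mul]
      intro hh; exact h (hh ▸ k.isLt)
  -- key claim for A
  have claimA : (T * A * S).submatrix id c = ι * J₁ := by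
    ext i j
    rw [hιmul]
    obtain ⟨i', rfl⟩ := e.surjective i
    simp only [Matrix.submatrix_apply, id_eq, hA, Equiv.symm_apply_apply, hcol]
    cases i' with
    | inl a =>
      simp only [Matrix.fromBlocks_apply₁₁]
      obtain ⟨a', rfl⟩ := e2.surjective a
      rw [hJ]
      simp only [Matrix.submatrix_apply, Equiv.symm_apply_apply, hcol2]
      cases a' with
      | inl b =>
        rw [dif_pos (by rw [heL, he2L]; exact b.isLt)]
        have hb : (⟨((e (Sum.inl (e2 (Sum.inl b)))) : ℕ), by rw [heL, he2L]; exact b.isLt⟩ : Fin s) = b :=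
          Fin.ext (by simp [heL, he2L])
        simp only [Matrix.fromBlocks_apply₁₁, hb]
      | inr b =>
        rw [dif_neg (by rw [heL, he2R]; omega)]
        simp
    | inr a =>
      rw [dif_neg (by rw [heR]; omega)]
      simp
  -- key claim for B
  have claimB : (T * B * S).submatrix id c = ι := by
    ext i j
    obtain ⟨i', rfl⟩ := e.surjective i
    simp only [Matrix.submatrix_apply, id_eq, hB, Equiv.symm_apply_apply, hcol]
    cases i' with
    | inl a =>
      simp only [Matrix.fromBlocks_apply₁₁, hι, Matrix.of_apply, Matrix.one_apply]
      by_cases hab : a = Fin.castLE hsd j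
      · rw [if_pos hab, if_pos (by rw [heL, hab]; simp)]
      · rw [if_neg hab, if_neg]
        intro hh; exact hab (Fin.ext (by rw [← heL a]; exact hh.trans (by simp)))
    | inr a =>
      simp only [Matrix.fromBlocks_apply₂₁, Matrix.zero_apply, hι, Matrix.of_apply]
      rw [if_neg]
      rw [heR]
      have := j.isLt
      omega
  -- turn the claims into statements about A and B
  have hAS : A * S = T⁻¹ * (T * A * S) := by
    rw [← Matrix.mul_assoc, ← Matrix.mul_assoc, Matrix.nonsing_inv_mul T hTd, Matrix.one_mul]
  have hBS : B * S = T⁻¹ * (T * B * S) := by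
    rw [← Matrix.mul_assoc, ← Matrix.mul_assoc, Matrix.nonsing_inv_mul T hTd, Matrix.one_mul]
  have hASc : A * S.submatrix id c = T⁻¹.submatrix id c * J₁ := by
    rw [hsubcol, hsubcol, ← Matrix.mul_assoc, hAS, Matrix.mul_assoc,
      ← hsubcol, claimA, ← Matrix.mul_assoc, ← hsubcol]
  have hBSc : B * S.submatrix id c = T⁻¹.submatrix id c := by
    rw [hsubcol, ← Matrix.mul_assoc, hBS, Matrix.mul_assoc, ← hsubcol, claimB, ← hsubcol]
  -- final assembly
  subst hAhat hBhat hR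
  rw [hF 0, pow_zero, Matrix.mul_one]
  simp only [Matrix.mul_sub, Matrix.sub_mul, Matrix.mul_smul, Matrix.smul_mul,
    Matrix.mul_one, Matrix.mul_assoc]
  rw [show A * (S.submatrix id c * (S⁻¹.submatrix c id * D)) =
      T⁻¹.submatrix id c * (J₁ * (S⁻¹.submatrix c id * D)) by
    rw [← Matrix.mul_assoc, hASc, Matrix.mul_assoc]]
  rw [show B * (S.submatrix id c * (S⁻¹.submatrix c id * D)) =
      T⁻¹.submatrix id c * (S⁻¹.submatrix c id * D) by
    rw [← Matrix.mul_assoc, hBSc]]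
end

section
/- Under the Weierstrass setting, let t ≥ s, let L, D ∈ ℂ^{n×t}, set R := F₀·D, Â := L*·A·R and B̂ := L*·B·R. If rank(L*·(T^{-1})_{(:,1:s)}) = s and rank((S^{-1})_{(1:s,:)}·D) = s, then for every z ∈ ℂ one has rank(z·B̂ − Â) = rank(z·I_s − J₁); in particular, rank(z·B̂ − Â) < s if and only if z is a diagonal entry of J₁ (i.e., an eigenvalue of the pencil zB − A inside Γ), and rank(z·B̂ − Â) = s otherwise. -/
open Matrix

private lemma mulVecLin_inj_of_rank' {t s : ℕ} (X : Matrix (Fin t) (Fin s) ℂ)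
    (hX : X.rank = s) : Function.Injective X.mulVecLin := by
  rw [← LinearMap.ker_eq_bot]
  have h1 := LinearMap.finrank_range_add_finrank_ker X.mulVecLin
  rw [Module.finrank_fin_fun, ← Matrix.rank, hX] at h1
  have h2 : Module.finrank ℂ (LinearMap.ker X.mulVecLin) = 0 := by omega
  rw [Submodule.finrank_eq_zero] at h2
  exact h2

private lemma rank_mul_left_of_rank' {t s u : ℕ} (X : Matrix (Fin t) (Fin s) ℂ)
    (M : Matrix (Fin s) (Fin u) ℂ) (hX : X.rank = s) : (X * M).rank = M.rank := by
  have hinj := mulVecLin_inj_of_rank' X hX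
  rw [Matrix.rank, Matrix.rank, Matrix.mulVecLin_mul, LinearMap.range_comp]
  exact ((Submodule.equivMapOfInjective _ hinj _).finrank_eq).symm

private lemma rank_mul_right_of_rank' {u s t : ℕ} (M : Matrix (Fin u) (Fin s) ℂ)
    (Y : Matrix (Fin s) (Fin t) ℂ) (hY : Y.rank = s) : (M * Y).rank = M.rank := by
  have htop : LinearMap.range Y.mulVecLin = ⊤ :=
    Submodule.eq_top_of_finrank_eq (by rw [← Matrix.rank, hY, Module.finrank_fin_fun])
  rw [Matrix.rank, Matrix.rank, Matrix.mulVecLin_mul,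
    LinearMap.range_comp_of_range_eq_top _ htop]

private lemma rank_lt_of_det_eq_zero' {s : ℕ} (M : Matrix (Fin s) (Fin s) ℂ)
    (h : M.det = 0) : M.rank < s := by
  rcases Matrix.exists_mulVec_eq_zero_iff.mpr h with ⟨v, hv0, hv⟩
  rcases lt_or_eq_of_le (Matrix.rank_le_width M) with h' | h'
  · exact h'
  · exact absurd (mulVecLin_inj_of_rank' M h' (by simpa using hv)) hv0

private lemma aux_inl {a b : ℕ} (h : a ≤ b) (i : Fin b) (hi : (i : ℕ) < a) :
    (finSumFinEquiv.trans (finCongr (Nat.add_sub_cancel' h))).symm i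
      = Sum.inl (⟨(i : ℕ), hi⟩ : Fin a) := by
  rw [Equiv.symm_trans_apply]
  have h2 : (finCongr (Nat.add_sub_cancel' h)).symm i
      = Fin.castAdd (b - a) (⟨(i : ℕ), hi⟩ : Fin a) := by
    ext; simp
  rw [h2, finSumFinEquiv_symm_apply_castAdd]

private lemma aux_inr {a b : ℕ} (h : a ≤ b) (i : Fin b) (hi : a ≤ (i : ℕ)) :
    (finSumFinEquiv.trans (finCongr (Nat.add_sub_cancel' h))).symm i
      = Sum.inr (⟨(i : ℕ) - a, by have := i.isLt; omega⟩ : Fin (b - a)) := by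
  rw [Equiv.symm_trans_apply]
  have h2 : (finCongr (Nat.add_sub_cancel' h)).symm i
      = Fin.natAdd a (⟨(i : ℕ) - a, by have := i.isLt; omega⟩ : Fin (b - a)) := by
    ext; simp; omega
  rw [h2, finSumFinEquiv_symm_apply_natAdd]

set_option maxRecDepth 8000 in
/-- If `rank(L*·(T⁻¹)_{(:,1:s)}) = s` and `rank((S⁻¹)_{(1:s,:)}·D) = s`, then
for every `z`, `rank(z·B̂ − Â) = rank(z·I_s − J₁)`; in particular the rank drops below `s`
exactly at the diagonal entries of `J₁` and equals `s` otherwise. -/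
theorem rank_projected_pencil
    (n d s t : ℕ) (hs : 0 < s) (hsd : s ≤ d) (hdn : d ≤ n) (hts : s ≤ t)
    (A B S T : Matrix (Fin n) (Fin n) ℂ) (hS : IsUnit S) (hT : IsUnit T)
    (J : Matrix (Fin d) (Fin d) ℂ) (hJtri : J.BlockTriangular (id : Fin d → Fin d))
    (N : Matrix (Fin (n - d)) (Fin (n - d)) ℂ) (hN : IsNilpotent N)
    (hA : T * A * S =
      (Matrix.fromBlocks J 0 0 (1 : Matrix (Fin (n - d)) (Fin (n - d)) ℂ)).submatrix
        (finSumFinEquiv.trans (finCongr (Nat.add_sub_cancel' hdn))).symm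
        (finSumFinEquiv.trans (finCongr (Nat.add_sub_cancel' hdn))).symm)
    (hB : T * B * S =
      (Matrix.fromBlocks (1 : Matrix (Fin d) (Fin d) ℂ) 0 0 N).submatrix
        (finSumFinEquiv.trans (finCongr (Nat.add_sub_cancel' hdn))).symm
        (finSumFinEquiv.trans (finCongr (Nat.add_sub_cancel' hdn))).symm)
    (J₁ : Matrix (Fin s) (Fin s) ℂ) (J₂ : Matrix (Fin (d - s)) (Fin (d - s)) ℂ)
    (hJ : J = (Matrix.fromBlocks J₁ 0 0 J₂).submatrix
        (finSumFinEquiv.trans (finCongr (Nat.add_sub_cancel' hsd))).symm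
        (finSumFinEquiv.trans (finCongr (Nat.add_sub_cancel' hsd))).symm)
    (F : ℕ → Matrix (Fin n) (Fin n) ℂ)
    (hF : ∀ k : ℕ, F k =
      S.submatrix id (Fin.castLE (hsd.trans hdn)) * (J₁ ^ k) *
        S⁻¹.submatrix (Fin.castLE (hsd.trans hdn)) id)
    (L D : Matrix (Fin n) (Fin t) ℂ)
    (R : Matrix (Fin n) (Fin t) ℂ) (hR : R = F 0 * D)
    (Ahat Bhat : Matrix (Fin t) (Fin t) ℂ)
    (hAhat : Ahat = Lᴴ * A * R) (hBhat : Bhat = Lᴴ * B * R)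
    (hrankL : (Lᴴ * T⁻¹.submatrix id (Fin.castLE (hsd.trans hdn))).rank = s)
    (hrankD : (S⁻¹.submatrix (Fin.castLE (hsd.trans hdn)) id * D).rank = s) :
    ∀ z : ℂ,
      (z • Bhat - Ahat).rank = (z • (1 : Matrix (Fin s) (Fin s) ℂ) - J₁).rank ∧
      ((z • Bhat - Ahat).rank < s ↔ ∃ i : Fin s, z = J₁ i i) ∧
      ((¬ ∃ i : Fin s, z = J₁ i i) → (z • Bhat - Ahat).rank = s) := by
  intro z
  have hsn : s ≤ n := hsd.trans hdn
  set c : Fin s → Fin n := Fin.castLE (hsd.trans hdn) with hc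
  set q : Fin n ≃ Fin d ⊕ Fin (n - d) :=
    (finSumFinEquiv.trans (finCongr (Nat.add_sub_cancel' hdn))).symm with hqdef
  set q' : Fin d ≃ Fin s ⊕ Fin (d - s) :=
    (finSumFinEquiv.trans (finCongr (Nat.add_sub_cancel' hsd))).symm with hq'def
  -- opaque names for T*A*S, T*B*S
  obtain ⟨MA, hMA⟩ : ∃ M, T * A * S = M := ⟨_, rfl⟩
  obtain ⟨MB, hMB⟩ : ∃ M, T * B * S = M := ⟨_, rfl⟩
  have hAe : MA = (Matrix.fromBlocks J 0 0 (1 : Matrix (Fin (n - d)) (Fin (n - d)) ℂ)).submatrix q q := by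
    rw [← hMA, hA]
  have hBe : MB = (Matrix.fromBlocks (1 : Matrix (Fin d) (Fin d) ℂ) 0 0 N).submatrix q q := by
    rw [← hMB, hB]
  -- cancellation
  have hdetS := (Matrix.isUnit_iff_isUnit_det S).mp hS
  have hdetT := (Matrix.isUnit_iff_isUnit_det T).mp hT
  have hTT : T⁻¹ * T = 1 := Matrix.nonsing_inv_mul T hdetT
  have hSS : S * S⁻¹ = 1 := Matrix.mul_nonsing_inv S hdetS
  have hSiS : S⁻¹ * S = 1 := Matrix.nonsing_inv_mul S hdetS
  have hcanc : ∀ M : Matrix (Fin n) (Fin n) ℂ, T⁻¹ * (T * M * S) * S⁻¹ = M := by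
    intro M
    rw [Matrix.mul_assoc T M S, ← Matrix.mul_assoc T⁻¹ T, hTT, Matrix.one_mul,
      Matrix.mul_assoc, hSS, Matrix.mul_one]
  have hA2 : A = T⁻¹ * MA * S⁻¹ := by rw [← hMA]; exact (hcanc A).symm
  have hB2 : B = T⁻¹ * MB * S⁻¹ := by rw [← hMB]; exact (hcanc B).symm
  have hcancS : ∀ M : Matrix (Fin n) (Fin t) ℂ, S⁻¹ * (S * M) = M := by
    intro M; rw [← Matrix.mul_assoc, hSiS, Matrix.one_mul]
  -- selector matrices
  set E : Matrix (Fin n) (Fin s) ℂ := Matrix.of fun i k => if i = c k then 1 else 0 with hE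
  set E' : Matrix (Fin s) (Fin n) ℂ := Matrix.of fun k i => if c k = i then 1 else 0 with hE'
  have hmulE : ∀ M : Matrix (Fin n) (Fin n) ℂ, M * E = M.submatrix id c := by
    intro M; ext i j
    simp [hE, Matrix.mul_apply, mul_ite, mul_one, mul_zero]
  have hmulE' : ∀ M : Matrix (Fin n) (Fin n) ℂ, E' * M = M.submatrix c id := by
    intro M; ext i j
    simp [hE', Matrix.mul_apply, ite_mul, one_mul, zero_mul]
  have hSc : S.submatrix id c = S * E := (hmulE S).symm
  have hScinv : S⁻¹.submatrix c id = E' * S⁻¹ := (hmulE' S⁻¹).symm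
  have hTc : T⁻¹.submatrix id c = T⁻¹ * E := (hmulE T⁻¹).symm
  -- computation of E-multiplication entries
  have hEmul : ∀ (X : Matrix (Fin s) (Fin s) ℂ) (i : Fin n) (j : Fin s),
      (E * X) i j = if h : (i : ℕ) < s then X ⟨(i : ℕ), h⟩ j else 0 := by
    intro X i j
    rw [Matrix.mul_apply]
    split_ifs with h
    · rw [Finset.sum_eq_single (⟨(i : ℕ), h⟩ : Fin s)]
      · simp only [hE, Matrix.of_apply]
        rw [if_pos (by ext; simp [hc]), one_mul]
      · intro b _ hb
        simp only [hE, Matrix.of_apply]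
        rw [if_neg, zero_mul]
        intro hib
        exact hb (by ext; have := congrArg Fin.val hib; simpa [hc] using this.symm)
      · intro hb; exact absurd (Finset.mem_univ _) hb
    · apply Finset.sum_eq_zero
      intro b _
      simp only [hE, Matrix.of_apply]
      rw [if_neg, zero_mul]
      intro hib
      have := congrArg Fin.val hib
      simp [hc] at this
      omega
  have hq'c : ∀ j : Fin s, q' (Fin.castLE hsd j) = Sum.inl j := by
    intro j
    rw [hq'def]
    have := aux_inl hsd (Fin.castLE hsd j) (by simp)
    rw [this]
    exact congrArg Sum.inl (by ext; simp)
  -- the key entrywise identity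
  have key : ∀ (i : Fin n) (j : Fin s),
      (z • MB - MA) i (c j) =
        (E * (z • (1 : Matrix (Fin s) (Fin s) ℂ) - J₁)) i j := by
    intro i j
    have hqcj : q (c j) = Sum.inl (Fin.castLE hsd j) := by
      rw [hqdef]
      have := aux_inl hdn (c j) (by simp [hc]; omega)
      rw [this]
      exact congrArg Sum.inl (by ext; simp [hc])
    rw [hEmul, Matrix.sub_apply, Matrix.smul_apply, hBe, hAe,
      Matrix.submatrix_apply, Matrix.submatrix_apply, hqcj]
    rcases lt_or_ge (i : ℕ) s with his | his
    · have hid : (i : ℕ) < d := his.trans_le hsd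
      have hqi : q i = Sum.inl (⟨(i : ℕ), hid⟩ : Fin d) := by
        rw [hqdef]; exact aux_inl hdn i hid
      have hq'i : q' (⟨(i : ℕ), hid⟩ : Fin d) = Sum.inl (⟨(i : ℕ), his⟩ : Fin s) := by
        rw [hq'def]; exact aux_inl hsd _ his
      rw [hqi, dif_pos his]
      rw [Matrix.fromBlocks_apply₁₁, Matrix.fromBlocks_apply₁₁, hJ,
        Matrix.submatrix_apply, hq'i, hq'c j, Matrix.fromBlocks_apply₁₁,
        Matrix.sub_apply, Matrix.smul_apply]
      congr 1
      rw [Matrix.one_apply, Matrix.one_apply]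
      by_cases hij : ((i : ℕ) = (j : ℕ))
      · rw [if_pos (by ext; simpa using hij), if_pos (by ext; simpa using hij)]
      · rw [if_neg (by intro hh; exact hij (by simpa using congrArg Fin.val hh)),
          if_neg (by intro hh; exact hij (by simpa using congrArg Fin.val hh))]
    · rw [dif_neg (not_lt.mpr his)]
      rcases lt_or_ge (i : ℕ) d with hid | hid
      · have hqi : q i = Sum.inl (⟨(i : ℕ), hid⟩ : Fin d) := by
          rw [hqdef]; exact aux_inl hdn i hid
        have hq'i : q' (⟨(i : ℕ), hid⟩ : Fin d)
            = Sum.inr (⟨(i : ℕ) - s, by omega⟩ : Fin (d - s)) := by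
          rw [hq'def]; exact aux_inr hsd _ his
        rw [hqi, Matrix.fromBlocks_apply₁₁, Matrix.fromBlocks_apply₁₁, hJ,
          Matrix.submatrix_apply, hq'i, hq'c j, Matrix.fromBlocks_apply₂₁]
        rw [Matrix.one_apply, if_neg (by intro hh; have := congrArg Fin.val hh; simp at this; omega)]
        simp
      · have hqi : q i = Sum.inr (⟨(i : ℕ) - d, by have := i.isLt; omega⟩ : Fin (n - d)) := by
          rw [hqdef]; exact aux_inr hdn i hid
        rw [hqi, Matrix.fromBlocks_apply₂₁, Matrix.fromBlocks_apply₂₁]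
        simp
  have hPE : (z • MB - MA) * E = E * (z • (1 : Matrix (Fin s) (Fin s) ℂ) - J₁) := by
    rw [hmulE]
    ext i j
    exact key i j
  -- main factorization
  have core2 : z • (MB * (E * (E' * (S⁻¹ * D)))) - MA * (E * (E' * (S⁻¹ * D)))
      = E * ((z • (1 : Matrix (Fin s) (Fin s) ℂ) - J₁) * (E' * (S⁻¹ * D))) := by
    have h1 : (z • MB - MA) * (E * (E' * (S⁻¹ * D)))
        = z • (MB * (E * (E' * (S⁻¹ * D)))) - MA * (E * (E' * (S⁻¹ * D))) := by
      rw [Matrix.sub_mul, Matrix.smul_mul]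
    rw [← h1, ← Matrix.mul_assoc, hPE, Matrix.mul_assoc]
  have main : z • Bhat - Ahat =
      (Lᴴ * T⁻¹.submatrix id c) *
        ((z • (1 : Matrix (Fin s) (Fin s) ℂ) - J₁) * (S⁻¹.submatrix c id * D)) := by
    calc z • Bhat - Ahat
        = Lᴴ * (T⁻¹ * (z • (MB * (E * (E' * (S⁻¹ * D))))
            - MA * (E * (E' * (S⁻¹ * D))))) := by
          have hpiece : ∀ MX : Matrix (Fin n) (Fin n) ℂ,
              Lᴴ * (T⁻¹ * MX * S⁻¹) * (S * E * (E' * S⁻¹) * D)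
                = Lᴴ * (T⁻¹ * (MX * (E * (E' * (S⁻¹ * D))))) := by
            intro MX
            simp only [Matrix.mul_assoc]
            rw [hcancS]
          rw [hAhat, hBhat, hA2, hB2, hR, hF 0, pow_zero, Matrix.mul_one, hSc, hScinv,
            hpiece, hpiece]
          simp only [Matrix.mul_sub, Matrix.mul_smul]
      _ = Lᴴ * (T⁻¹ * (E * ((z • (1 : Matrix (Fin s) (Fin s) ℂ) - J₁)
            * (E' * (S⁻¹ * D))))) := by rw [core2]
      _ = (Lᴴ * T⁻¹.submatrix id c) *
            ((z • (1 : Matrix (Fin s) (Fin s) ℂ) - J₁) * (S⁻¹.submatrix c id * D)) := by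
          rw [hTc, hScinv]
          simp only [Matrix.mul_assoc]
  -- rank equality
  have hr1 : (z • Bhat - Ahat).rank = (z • (1 : Matrix (Fin s) (Fin s) ℂ) - J₁).rank := by
    rw [main, rank_mul_left_of_rank' _ _ hrankL, rank_mul_right_of_rank' _ _ hrankD]
  -- triangular structure of J₁
  have hJ1entry : ∀ i j : Fin s, J₁ i j = J (Fin.castLE hsd i) (Fin.castLE hsd j) := by
    intro i j
    rw [hJ, Matrix.submatrix_apply, hq'c i, hq'c j, Matrix.fromBlocks_apply₁₁]
  have htriJ1 : (z • (1 : Matrix (Fin s) (Fin s) ℂ) - J₁).BlockTriangular id := by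
    intro i j hij
    rw [Matrix.sub_apply, Matrix.smul_apply, Matrix.one_apply,
      if_neg (by intro hh; rw [hh] at hij; exact lt_irrefl _ hij), hJ1entry,
      hJtri (by simp only [id_eq, Fin.lt_def, Fin.coe_castLE]; exact hij)]
    simp
  have hdet : (z • (1 : Matrix (Fin s) (Fin s) ℂ) - J₁).det = ∏ i, (z - J₁ i i) := by
    rw [Matrix.det_of_upperTriangular htriJ1]
    apply Finset.prod_congr rfl
    intro i _
    rw [Matrix.sub_apply, Matrix.smul_apply, Matrix.one_apply_eq, smul_eq_mul, mul_one]
  have hdetiff : (z • (1 : Matrix (Fin s) (Fin s) ℂ) - J₁).det = 0 ↔ ∃ i, z = J₁ i i := by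
    rw [hdet, Finset.prod_eq_zero_iff]
    simp [sub_eq_zero]
  have hrank2 : (z • (1 : Matrix (Fin s) (Fin s) ℂ) - J₁).rank < s ↔ ∃ i, z = J₁ i i := by
    constructor
    · intro h
      by_contra hne
      have hdne : (z • (1 : Matrix (Fin s) (Fin s) ℂ) - J₁).det ≠ 0 := fun hh =>
        hne (hdetiff.mp hh)
      have hu : IsUnit (z • (1 : Matrix (Fin s) (Fin s) ℂ) - J₁) :=
        (Matrix.isUnit_iff_isUnit_det _).mpr (isUnit_iff_ne_zero.mpr hdne)
      rw [Matrix.rank_of_isUnit _ hu, Fintype.card_fin] at h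
      exact lt_irrefl _ h
    · intro hex
      exact rank_lt_of_det_eq_zero' _ (hdetiff.mpr hex)
  refine ⟨hr1, ?_, ?_⟩
  · rw [hr1]; exact hrank2
  · intro h
    rw [hr1]
    have h1 : ¬ (z • (1 : Matrix (Fin s) (Fin s) ℂ) - J₁).rank < s := fun hlt =>
      h (hrank2.mp hlt)
    have h2 := Matrix.rank_le_width (z • (1 : Matrix (Fin s) (Fin s) ℂ) - J₁)
    omega
end

section
/- Let A, B be n×n complex matrices such that the pencil z·B − A is regular, i.e., there exists z₀ ∈ ℂ with det(z₀·B − A) ≠ 0. Then there exist an integer d with 0 ≤ d ≤ n, invertible n×n complex matrices T and S, a d×d complex matrix J, and an (n−d)×(n−d) nilpotent complex matrix N, such that T·A·S = [[J, 0],[0, I_{n−d}]] and T·B·S = [[I_d, 0],[0, N]] in 2×2 block form. -/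
open Matrix

set_option maxHeartbeats 1000000 in
set_option synthInstance.maxHeartbeats 100000 in
/-- Every regular pencil `z·B − A` admits a Weierstrass canonical form:
there are invertible `T`, `S` with `T·A·S = diag(J, I_{n−d})` and `T·B·S = diag(I_d, N)`
with `N` nilpotent. -/
theorem weierstrass_canonical_form
    (n : ℕ) (A B : Matrix (Fin n) (Fin n) ℂ)
    (hreg : ∃ z₀ : ℂ, (z₀ • B - A).det ≠ 0) :
    ∃ (d : ℕ) (hdn : d ≤ n) (T S : Matrix (Fin n) (Fin n) ℂ),
      IsUnit T ∧ IsUnit S ∧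
      ∃ (J : Matrix (Fin d) (Fin d) ℂ) (N : Matrix (Fin (n - d)) (Fin (n - d)) ℂ),
        IsNilpotent N ∧
        T * A * S =
          (Matrix.fromBlocks J 0 0 (1 : Matrix (Fin (n - d)) (Fin (n - d)) ℂ)).submatrix
            (finSumFinEquiv.trans (finCongr (Nat.add_sub_cancel' hdn))).symm
            (finSumFinEquiv.trans (finCongr (Nat.add_sub_cancel' hdn))).symm ∧
        T * B * S =
          (Matrix.fromBlocks (1 : Matrix (Fin d) (Fin d) ℂ) 0 0 N).submatrix
            (finSumFinEquiv.trans (finCongr (Nat.add_sub_cancel' hdn))).symm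
            (finSumFinEquiv.trans (finCongr (Nat.add_sub_cancel' hdn))).symm := by
  classical
  obtain ⟨z₀, hz⟩ := hreg
  set Mz : Matrix (Fin n) (Fin n) ℂ := z₀ • B - A with hMzdef
  have hMzu : IsUnit Mz.det := isUnit_iff_ne_zero.mpr hz
  set W : Matrix (Fin n) (Fin n) ℂ := Mz⁻¹ with hWdef
  have hWM : W * Mz = 1 := Matrix.nonsing_inv_mul Mz hMzu
  have hMW : Mz * W = 1 := Matrix.mul_nonsing_inv Mz hMzu
  set C : Matrix (Fin n) (Fin n) ℂ := W * B with hCdef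
  have hWA : W * A = z₀ • C - 1 := by
    have h : W * (z₀ • B - A) = 1 := by rw [← hMzdef]; exact hWM
    rw [Matrix.mul_sub, Matrix.mul_smul] at h
    rw [← hCdef] at h
    rw [← h]; abel
  set f : Module.End ℂ (Fin n → ℂ) := Matrix.toLin' C with hfdef
  obtain ⟨k, hk⟩ := Filter.eventually_atTop.mp (LinearMap.eventually_isCompl_ker_pow_range_pow f)
  set m := k + 1 with hmdef
  have hcompl : IsCompl (LinearMap.ker (f ^ m)) (LinearMap.range (f ^ m)) := hk m (Nat.le_succ k)
  set q : Submodule ℂ (Fin n → ℂ) := LinearMap.ker (f ^ m) with hqdef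
  set p : Submodule ℂ (Fin n → ℂ) := LinearMap.range (f ^ m) with hpdef
  have hcomm : ∀ y, (f ^ m) (f y) = f ((f ^ m) y) := fun y => by
    rw [← Module.End.mul_apply, ← Module.End.mul_apply, ← pow_succ, ← pow_succ']
  have hp : ∀ x ∈ p, f x ∈ p := by
    rintro x ⟨y, rfl⟩
    exact ⟨f y, hcomm y⟩
  have hq : ∀ x ∈ q, f x ∈ q := by
    intro x hx
    have hx' : (f ^ m) x = 0 := hx
    show (f ^ m) (f x) = 0
    rw [hcomm, hx', map_zero]
  set f₁ : Module.End ℂ p := f.restrict hp with hf₁def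
  set f₀ : Module.End ℂ q := f.restrict hq with hf₀def
  have hf₀m : f₀ ^ m = 0 := by
    rw [hf₀def, Module.End.pow_restrict m hq]
    apply LinearMap.ext; intro x
    apply Subtype.ext
    simp only [LinearMap.restrict_coe_apply, LinearMap.zero_apply, ZeroMemClass.coe_zero]
    exact x.2
  have hker : LinearMap.ker f ≤ q := by
    intro x hx
    have hx' : f x = 0 := hx
    show (f ^ m) x = 0
    rw [hmdef, pow_succ, Module.End.mul_apply, hx', map_zero]
  have hf₁inj : Function.Injective f₁ := by
    rw [← LinearMap.ker_eq_bot, eq_bot_iff]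
    rintro ⟨x, hxp⟩ hx0
    have hfx : f x = 0 := by
      have h := congrArg Subtype.val (LinearMap.mem_ker.mp hx0)
      simpa [hf₁def, LinearMap.restrict_coe_apply] using h
    have hxq : x ∈ q := hker hfx
    have hx0' : x = 0 := Submodule.disjoint_def.mp hcompl.disjoint x hxq hxp
    exact (Submodule.mem_bot ℂ).mpr (Subtype.ext hx0')
  have hf₁u : IsUnit f₁ :=
    (Module.End.isUnit_iff f₁).mpr ⟨hf₁inj, LinearMap.injective_iff_surjective.mp hf₁inj⟩
  have hfr : Module.finrank ℂ q + Module.finrank ℂ p = n := by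
    have h := Submodule.finrank_add_eq_of_isCompl hcompl
    simpa using h
  set d := Module.finrank ℂ p with hddef
  have hdn : d ≤ n := by omega
  have hqd : Module.finrank ℂ q = n - d := by omega
  let b₁ : Module.Basis (Fin d) ℂ p := (Module.finBasis ℂ p).reindex (finCongr hddef.symm)
  let b₀ : Module.Basis (Fin (n - d)) ℂ q := (Module.finBasis ℂ q).reindex (finCongr hqd)
  let eqv : (p × q) ≃ₗ[ℂ] (Fin n → ℂ) := Submodule.prodEquivOfIsCompl p q hcompl.symm
  let bb : Module.Basis (Fin d ⊕ Fin (n - d)) ℂ (Fin n → ℂ) := (b₁.prod b₀).map eqv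
  have hconj : (↑eqv.symm : (Fin n → ℂ) →ₗ[ℂ] (p × q)) ∘ₗ f ∘ₗ (↑eqv : (p × q) →ₗ[ℂ] (Fin n → ℂ))
      = f₁.prodMap f₀ := by
    apply LinearMap.ext
    rintro ⟨x, y⟩
    apply eqv.injective
    simp only [LinearMap.comp_apply, LinearEquiv.coe_coe, LinearEquiv.apply_symm_apply,
      LinearMap.prodMap_apply]
    show f (eqv (x, y)) = eqv (f₁ x, f₀ y)
    rw [show eqv (x, y) = ↑x + ↑y from Submodule.coe_prodEquivOfIsCompl' _ _ _ _,
        show eqv (f₁ x, f₀ y) = ↑(f₁ x) + ↑(f₀ y) from Submodule.coe_prodEquivOfIsCompl' _ _ _ _]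
    simp [hf₁def, hf₀def, LinearMap.restrict_coe_apply, map_add]
  set G : Matrix (Fin d) (Fin d) ℂ := LinearMap.toMatrix b₁ b₁ f₁ with hGdef
  set K : Matrix (Fin (n - d)) (Fin (n - d)) ℂ := LinearMap.toMatrix b₀ b₀ f₀ with hKdef
  have hbbmat : LinearMap.toMatrix bb bb f = Matrix.fromBlocks G 0 0 K := by
    rw [hGdef, hKdef, ← LinearMap.toMatrix_prodMap b₁ b₀ f₁ f₀, ← hconj]
    ext i j
    simp [bb, LinearMap.toMatrix_apply, Module.Basis.map_apply, Module.Basis.map_repr, LinearMap.comp_apply]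
  have hGu : IsUnit G := by
    have h := hf₁u.map (LinearMap.toMatrixAlgEquiv b₁)
    rwa [show (LinearMap.toMatrixAlgEquiv b₁) f₁ = LinearMap.toMatrix b₁ b₁ f₁ from rfl,
      ← hGdef] at h
  have hGdu : IsUnit G.det := (Matrix.isUnit_iff_isUnit_det G).mp hGu
  have hGG : G⁻¹ * G = 1 := Matrix.nonsing_inv_mul G hGdu
  have hKm : K ^ m = 0 := by
    rw [hKdef, LinearMap.toMatrix_pow, hf₀m]
    ext i j
    simp [LinearMap.toMatrix_apply]
  have hKnil : IsNilpotent K := ⟨m, hKm⟩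
  set Z : Matrix (Fin (n - d)) (Fin (n - d)) ℂ := z₀ • K - 1 with hZdef
  have hZU : IsUnit Z := by
    have hnil : IsNilpotent (z₀ • K) := ⟨m, by rw [smul_pow, hKm, smul_zero]⟩
    exact hnil.isUnit_sub_one
  have hZdu : IsUnit Z.det := (Matrix.isUnit_iff_isUnit_det Z).mp hZU
  have hZZ : Z⁻¹ * Z = 1 := Matrix.nonsing_inv_mul Z hZdu
  have hNnil : IsNilpotent (Z⁻¹ * K) := by
    obtain ⟨u, hu⟩ := hZU
    have hcom : Commute Z K := by
      rw [hZdef]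
      exact (((Commute.refl K).smul_left z₀).sub_left (Commute.one_left K))
    have hcom1 : Commute (↑u : Matrix (Fin (n - d)) (Fin (n - d)) ℂ) K := hu ▸ hcom
    have hcom2 := hcom1.units_inv_left
    have h := hcom2.isNilpotent_mul_left hKnil
    rwa [Matrix.coe_units_inv, hu] at h
  -- change of basis matrices
  let std : Module.Basis (Fin n) ℂ (Fin n → ℂ) := Pi.basisFun ℂ (Fin n)
  set P : Matrix (Fin n) (Fin d ⊕ Fin (n - d)) ℂ := std.toMatrix bb with hPdef
  set Pinv : Matrix (Fin d ⊕ Fin (n - d)) (Fin n) ℂ := bb.toMatrix std with hPinvdef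
  have hPP : P * Pinv = 1 := Module.Basis.toMatrix_mul_toMatrix_flip std bb
  have hPP' : Pinv * P = 1 := Module.Basis.toMatrix_mul_toMatrix_flip bb std
  have hCP : C = P * Matrix.fromBlocks G 0 0 K * Pinv := by
    have h0 : LinearMap.toMatrix std std f = C := by
      rw [show std = Pi.basisFun ℂ (Fin n) from rfl, LinearMap.toMatrix_eq_toMatrix']
      exact LinearMap.toMatrix'_toLin' C
    have h2 := basis_toMatrix_mul_linearMap_toMatrix_mul_basis_toMatrix
      (b := std) (c := std) (b' := bb) (c' := bb) (f := f)
    rw [hbbmat] at h2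
    rw [← h0, ← h2, hPdef, hPinvdef]
  set Dm : Matrix (Fin d ⊕ Fin (n - d)) (Fin d ⊕ Fin (n - d)) ℂ :=
    Matrix.fromBlocks G 0 0 K with hDdef
  set Q : Matrix (Fin d ⊕ Fin (n - d)) (Fin d ⊕ Fin (n - d)) ℂ :=
    Matrix.fromBlocks G⁻¹ 0 0 Z⁻¹ with hQdef
  set Rm : Matrix (Fin d ⊕ Fin (n - d)) (Fin d ⊕ Fin (n - d)) ℂ :=
    Matrix.fromBlocks G 0 0 Z with hRdef
  have hQR : Q * Rm = 1 := by
    rw [hQdef, hRdef, Matrix.fromBlocks_multiply]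
    simp [hGG, hZZ]
  let ee : (Fin d ⊕ Fin (n - d)) ≃ Fin n :=
    finSumFinEquiv.trans (finCongr (Nat.add_sub_cancel' hdn))
  have key : ∀ (X : Matrix (Fin d ⊕ Fin (n - d)) (Fin n) ℂ) (Y : Matrix (Fin n) (Fin n) ℂ)
      (Zm : Matrix (Fin n) (Fin d ⊕ Fin (n - d)) ℂ),
      X.submatrix ee.symm id * Y * Zm.submatrix id ee.symm
        = (X * Y * Zm).submatrix ee.symm ee.symm := by
    intro X Y Zm
    rw [Matrix.submatrix_mul (X * Y) Zm ee.symm id ee.symm Function.bijective_id,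
        Matrix.submatrix_mul X Y ee.symm id id Function.bijective_id,
        Matrix.submatrix_id_id]
  set T : Matrix (Fin n) (Fin n) ℂ := (Q * Pinv).submatrix ee.symm id * W with hTdef
  set S : Matrix (Fin n) (Fin n) ℂ := P.submatrix id ee.symm with hSdef
  have hstep : ∀ Y : Matrix (Fin n) (Fin n) ℂ,
      (Q * Pinv).submatrix ee.symm id * Y * P.submatrix id ee.symm
        = (Q * (Pinv * Y * P)).submatrix ee.symm ee.symm := by
    intro Y
    rw [key (Q * Pinv) Y P]
    congr 1
    rw [Matrix.mul_assoc Q Pinv Y, Matrix.mul_assoc Q (Pinv * Y) P]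
  have hmid : ∀ X : Matrix (Fin d ⊕ Fin (n - d)) (Fin d ⊕ Fin (n - d)) ℂ,
      Pinv * (P * X * Pinv) * P = X := by
    intro X
    rw [Matrix.mul_assoc P X Pinv, ← Matrix.mul_assoc Pinv P (X * Pinv), hPP', Matrix.one_mul,
        Matrix.mul_assoc X Pinv P, hPP', Matrix.mul_one]
  -- T * B * S
  have hTBS : T * B * S = (Matrix.fromBlocks 1 0 0 (Z⁻¹ * K)).submatrix ee.symm ee.symm := by
    have h1 : T * B * S = (Q * Pinv).submatrix ee.symm id * C * P.submatrix id ee.symm := by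
      rw [hTdef, hSdef, hCdef, mul_assoc ((Q * Pinv).submatrix ee.symm id) W B]
    rw [h1, hstep C, hCP, hmid]
    congr 1
    rw [hQdef, hDdef, Matrix.fromBlocks_multiply]
    simp [hGG, hZZ]
  -- T * A * S
  have h3 : z₀ • (P * Dm * Pinv) - 1 = P * (z₀ • Dm - 1) * Pinv := by
    rw [Matrix.mul_sub, Matrix.sub_mul, Matrix.mul_one, hPP, Matrix.mul_smul, Matrix.smul_mul]
  have hWA' : Pinv * (W * A) * P = z₀ • Dm - 1 := by
    rw [hWA, hCP, h3, hmid]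
  have h4 : z₀ • Dm - 1 = Matrix.fromBlocks (z₀ • G - 1) 0 0 Z := by
    rw [hDdef, hZdef]
    ext i j
    rcases i with i | i <;> rcases j with j | j <;>
      simp [Matrix.one_apply, Matrix.sub_apply, Matrix.smul_apply]
  have hTAS : T * A * S
      = (Matrix.fromBlocks (G⁻¹ * (z₀ • G - 1)) 0 0 1).submatrix ee.symm ee.symm := by
    have h1 : T * A * S = (Q * Pinv).submatrix ee.symm id * (W * A) * P.submatrix id ee.symm := by
      rw [hTdef, hSdef, mul_assoc ((Q * Pinv).submatrix ee.symm id) W A]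
    rw [h1, hstep (W * A), hWA', h4]
    congr 1
    rw [hQdef, Matrix.fromBlocks_multiply]
    simp [hZZ]
  -- invertibility of S
  have hSmul : S * Pinv.submatrix ee.symm id = 1 := by
    rw [hSdef, ← Matrix.submatrix_mul P Pinv id ee.symm id ee.symm.bijective, hPP,
        Matrix.submatrix_id_id]
  have hSu : IsUnit S := by
    refine (Matrix.isUnit_iff_isUnit_det S).mpr
      (IsUnit.of_mul_eq_one (a := S.det) (Pinv.submatrix ee.symm id).det ?_)
    rw [← Matrix.det_mul, hSmul, Matrix.det_one]
  -- invertibility of T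
  have hTmul : T * (Mz * (P * Rm).submatrix id ee.symm) = 1 := by
    rw [hTdef]
    have hassoc : (Q * Pinv).submatrix ee.symm id * W * (Mz * (P * Rm).submatrix id ee.symm)
        = (Q * Pinv).submatrix ee.symm id * (W * Mz) * (P * Rm).submatrix id ee.symm := by
      rw [← Matrix.mul_assoc ((Q * Pinv).submatrix ee.symm id * W) Mz
            ((P * Rm).submatrix id ee.symm),
          Matrix.mul_assoc ((Q * Pinv).submatrix ee.symm id) W Mz]
    rw [hassoc, hWM, mul_one,
        ← Matrix.submatrix_mul (Q * Pinv) (P * Rm) ee.symm id ee.symm Function.bijective_id]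
    have h5 : Q * Pinv * (P * Rm) = 1 := by
      rw [← Matrix.mul_assoc (Q * Pinv) P Rm, Matrix.mul_assoc Q Pinv P, hPP',
          Matrix.mul_one, hQR]
    rw [h5, Matrix.submatrix_one_equiv ee.symm]
  have hTu : IsUnit T := by
    refine (Matrix.isUnit_iff_isUnit_det T).mpr
      (IsUnit.of_mul_eq_one (a := T.det) (Mz * (P * Rm).submatrix id ee.symm).det ?_)
    rw [← Matrix.det_mul, hTmul, Matrix.det_one]
  exact ⟨d, hdn, T, S, hTu, hSu, G⁻¹ * (z₀ • G - 1), Z⁻¹ * K, hNnil, hTAS, hTBS⟩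
end
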